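/- For every restricted-game-based meta-strategy solver (RGB-MSS) M, every N ∈ ℕ, and every initial pure strategy π₀ ∈ Fin N, there exists a skew-symmetric payoff matrix A : Fin N → Fin N → ℝ such that every PSRO trajectory driven by M on A with exact best-response oracle starting from π₀ satisfies at least one of: (i) PE({s 0, …, s t}) > 0 for all t (the trajectory never reaches a Nash equilibrium); or (ii) the first t with PE({s 0, …, s t}) = 0 satisfies t ≥ N − 1, i.e., PE reaches zero only after all N pure strategies have been incorporated. -/

import Mathlib

/-- Payoff of pure strategy `i` against mixed strategy `σ`: `(Aσ) i = ∑ j, A i j * σ j`. -/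
noncomputable def pay {N : ℕ} (A : Fin N → Fin N → ℝ) (σ : Fin N → ℝ) (i : Fin N) : ℝ :=
  ∑ j, A i j * σ j

/-- `max_i (Aσ) i`. -/
noncomputable def maxPay {N : ℕ} (A : Fin N → Fin N → ℝ) (σ : Fin N → ℝ) : ℝ :=
  ⨆ i, pay A σ i

/-- `σ` is a mixed strategy supported inside `P`. -/
def SuppIn {N : ℕ} (P : Set (Fin N)) (σ : Fin N → ℝ) : Prop :=
  σ ∈ stdSimplex ℝ (Fin N) ∧ ∀ j ∉ P, σ j = 0

/-- Population exploitability of a population `P`: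
the least value of `max_i (Aσ) i` over mixed strategies supported in `P`. -/
noncomputable def PE {N : ℕ} (A : Fin N → Fin N → ℝ) (P : Set (Fin N)) : ℝ :=
  sInf (maxPay A '' {σ | SuppIn P σ})

/-- `i` is a best response to `σ`. -/
def IsBR {N : ℕ} (A : Fin N → Fin N → ℝ) (σ : Fin N → ℝ) (i : Fin N) : Prop :=
  pay A σ i = maxPay A σ

/-- A restricted-game-based meta-strategy solver (RGB-MSS): for each `d ≥ 1`,
a map from `d × d` real matrices to the standard simplex on `Fin d`. -/
def IsMSS (M : (d : ℕ) → (Fin d → Fin d → ℝ) → (Fin d → ℝ)) : Prop :=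
  ∀ d, 0 < d → ∀ U, M d U ∈ stdSimplex ℝ (Fin d)

/-- The full-game mixed strategy `σ_t` induced by the MSS output on the restricted
game built from the first `t+1` strategies of the trajectory `s`. -/
noncomputable def psroMix {N : ℕ} (M : (d : ℕ) → (Fin d → Fin d → ℝ) → (Fin d → ℝ))
    (A : Fin N → Fin N → ℝ) (s : ℕ → Fin N) (t : ℕ) : Fin N → ℝ :=
  fun k => ∑ i : Fin (t + 1),
    if s i.1 = k then M (t + 1) (fun a b : Fin (t + 1) => A (s a.1) (s b.1)) i else 0

/-- A PSRO trajectory with exact best-response oracle driven by the MSS `M`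
on the game `A`, starting from the pure strategy `π₀`. -/
def IsPSROTraj {N : ℕ} (M : (d : ℕ) → (Fin d → Fin d → ℝ) → (Fin d → ℝ))
    (A : Fin N → Fin N → ℝ) (π₀ : Fin N) (s : ℕ → Fin N) : Prop :=
  s 0 = π₀ ∧ ∀ t, IsBR A (psroMix M A s t) (s (t + 1))

/-- The population `{s 0, …, s t}`. -/
def popUpTo {N : ℕ} (s : ℕ → Fin N) (t : ℕ) : Set (Fin N) :=
  {k | ∃ i ≤ t, s i = k}


/-- The "ladder" payoff on natural indices, with big win `B = 2*(n+1)^2`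
of `j+1` over `j`, and small losses of `i` to every `j ≤ i-2`. -/
noncomputable def amat (n : ℕ) (i j : ℕ) : ℝ :=
  if i = j then 0
  else if i = j + 1 then 2*(n+1)^2
  else if j = i + 1 then -(2*(n+1)^2)
  else if j < i then -1 else 1

lemma amat_skew (n i j : ℕ) : amat n j i = - amat n i j := by
  unfold amat
  split_ifs <;> first | (exfalso; omega) | norm_num

lemma amat_far (n i j : ℕ) (h : j + 1 < i) : amat n i j = -1 := by
  unfold amat
  split_ifs <;> first | (exfalso; omega) | rfl

lemma amat_ge_neg_one (n i j : ℕ) (h1 : i ≠ j + 1) (h2 : j ≠ i + 1) : -1 ≤ amat n i j := by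
  unfold amat
  split_ifs <;> norm_num

lemma amat_win (n j : ℕ) : amat n (j+1) j = 2*(n+1)^2 := by
  unfold amat
  split_ifs <;> first | (exfalso; omega) | rfl

lemma amat_lose (n i : ℕ) : amat n i (i+1) = -(2*(n+1)^2) := by
  unfold amat
  split_ifs <;> first | (exfalso; omega) | rfl

lemma pay_le_maxPay {n : ℕ} (A : Fin (n+1) → Fin (n+1) → ℝ) (σ : Fin (n+1) → ℝ)
    (i : Fin (n+1)) : pay A σ i ≤ maxPay A σ :=
  le_ciSup (Set.Finite.bddAbove (Set.finite_range _)) i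

lemma weighted_sum_zero {n : ℕ} (A : Fin (n+1) → Fin (n+1) → ℝ)
    (hA : ∀ i j, A j i = -A i j) (σ : Fin (n+1) → ℝ) :
    ∑ i, σ i * pay A σ i = 0 := by
  have key : (∑ i, σ i * pay A σ i) = -(∑ i, σ i * pay A σ i) := by
    calc (∑ i, σ i * pay A σ i) = ∑ i, ∑ j, σ i * (A i j * σ j) := by
          simp [pay, Finset.mul_sum]
      _ = ∑ j, ∑ i, σ i * (A i j * σ j) := Finset.sum_comm
      _ = ∑ j, ∑ i, -(σ j * (A j i * σ i)) := by
          refine Finset.sum_congr rfl fun j _ => Finset.sum_congr rfl fun i _ => ?_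
          rw [hA j i]; ring
      _ = -(∑ j, ∑ i, σ j * (A j i * σ i)) := by
          simp [Finset.sum_neg_distrib]
      _ = -(∑ i, σ i * pay A σ i) := by simp [pay, Finset.mul_sum]
  linarith

lemma maxPay_nonneg {n : ℕ} (A : Fin (n+1) → Fin (n+1) → ℝ)
    (hA : ∀ i j, A j i = -A i j) (σ : Fin (n+1) → ℝ)
    (hσ : σ ∈ stdSimplex ℝ (Fin (n+1))) : 0 ≤ maxPay A σ := by
  by_contra h
  push_neg at h
  obtain ⟨i, hi⟩ : ∃ i, σ i ≠ 0 := by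
    by_contra hall
    push_neg at hall
    have := hσ.2
    simp [hall] at this
  have hσi : 0 < σ i := (hσ.1 i).lt_of_ne (Ne.symm hi)
  have hlt : ∀ j, pay A σ j < 0 := fun j => lt_of_le_of_lt (pay_le_maxPay A σ j) h
  have hsum : (∑ j, σ j * pay A σ j) < 0 := by
    have : ∀ j ∈ Finset.univ, σ j * pay A σ j ≤ 0 :=
      fun j _ => mul_nonpos_of_nonneg_of_nonpos (hσ.1 j) (hlt j).le
    have hi' : σ i * pay A σ i < 0 := mul_neg_of_pos_of_neg hσi (hlt i)
    calc (∑ j, σ j * pay A σ j) ≤ σ i * pay A σ i + ∑ j ∈ Finset.univ.erase i, 0 := by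
          rw [← Finset.add_sum_erase _ _ (Finset.mem_univ i)]
          exact add_le_add le_rfl (Finset.sum_le_sum fun j hj => this j (Finset.mem_univ j))
      _ < 0 := by simpa using hi'
  rw [weighted_sum_zero A hA σ] at hsum
  exact lt_irrefl _ hsum


lemma psroMix_mem {N : ℕ} (M : (d : ℕ) → (Fin d → Fin d → ℝ) → (Fin d → ℝ))
    (hM : IsMSS M) (A : Fin N → Fin N → ℝ) (s : ℕ → Fin N) (t : ℕ) :
    psroMix M A s t ∈ stdSimplex ℝ (Fin N) := by
  have hμ := hM (t+1) (Nat.succ_pos t) (fun a b : Fin (t + 1) => A (s a.1) (s b.1))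
  constructor
  · intro k
    apply Finset.sum_nonneg
    intro i _
    split
    · exact hμ.1 i
    · exact le_rfl
  · show (∑ k : Fin N, psroMix M A s t k) = 1
    unfold psroMix
    rw [Finset.sum_comm]
    calc ∑ i : Fin (t+1), ∑ k : Fin N,
        (if s i.1 = k then M (t + 1) (fun a b : Fin (t + 1) => A (s a.1) (s b.1)) i else 0)
        = ∑ i : Fin (t+1), M (t + 1) (fun a b : Fin (t + 1) => A (s a.1) (s b.1)) i := by
          refine Finset.sum_congr rfl fun i _ => ?_
          rw [Finset.sum_ite_eq]
          simp
      _ = 1 := hμ.2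

lemma psroMix_support {N : ℕ} (M : (d : ℕ) → (Fin d → Fin d → ℝ) → (Fin d → ℝ))
    (A : Fin N → Fin N → ℝ) (s : ℕ → Fin N) (t : ℕ) (k : Fin N)
    (h : psroMix M A s t k ≠ 0) : ∃ i ≤ t, s i = k := by
  by_contra hc
  push_neg at hc
  apply h
  apply Finset.sum_eq_zero
  intro i _
  have : s i.1 ≠ k := hc i.1 (Nat.lt_succ_iff.mp i.2)
  simp [this]

lemma noskip {n : ℕ} (M : (d : ℕ) → (Fin d → Fin d → ℝ) → (Fin d → ℝ)) (hM : IsMSS M)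
    (ρ : Fin (n+1) ≃ Fin (n+1)) (π₀ : Fin (n+1)) (hπ : (ρ π₀).1 = 0)
    (s : ℕ → Fin (n+1))
    (hs : IsPSROTraj M (fun i j => amat n (ρ i).1 (ρ j).1) π₀ s) :
    ∀ t, (ρ (s t)).1 ≤ t := by
  set A : Fin (n+1) → Fin (n+1) → ℝ := fun i j => amat n (ρ i).1 (ρ j).1 with hAdef
  have hA : ∀ i j, A j i = -A i j := fun i j => amat_skew n _ _
  intro t
  induction t using Nat.strong_induction_on with
  | _ t IH =>
    match t with
    | 0 => rw [hs.1, hπ]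
    | (t+1) =>
      by_contra hcon
      push_neg at hcon
      set σ := psroMix M A s t with hσdef
      have hσ : σ ∈ stdSimplex ℝ (Fin (n+1)) := psroMix_mem M hM A s t
      have hBR : pay A σ (s (t+1)) = maxPay A σ := hs.2 t
      have h0 : 0 ≤ maxPay A σ := maxPay_nonneg A hA σ hσ
      have hval : pay A σ (s (t+1)) = -1 := by
        unfold pay
        have hterm : ∀ j, A (s (t+1)) j * σ j = -(σ j) := by
          intro j
          by_cases hj : σ j = 0
          · rw [hj]; ring
          · obtain ⟨i, hi, rfl⟩ := psroMix_support M A s t j hj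
            have h1 : (ρ (s i)).1 ≤ t := le_trans (IH i (Nat.lt_succ_of_le hi)) hi
            have h2 : (ρ (s i)).1 + 1 < (ρ (s (t+1))).1 := by omega
            show amat n (ρ (s (t+1))).1 (ρ (s i)).1 * σ (s i) = -(σ (s i))
            rw [amat_far n _ _ h2]; ring
        rw [Finset.sum_congr rfl (fun j _ => hterm j)]
        simp [hσ.2]
      rw [hval] at hBR
      linarith


lemma core {n : ℕ} (ρ : Fin (n+1) ≃ Fin (n+1)) (σ : Fin (n+1) → ℝ)
    (hσ : σ ∈ stdSimplex ℝ (Fin (n+1)))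
    (hlast : ∀ j, (ρ j).1 = n → σ j = 0) :
    1 ≤ maxPay (fun i j => amat n (ρ i).1 (ρ j).1) σ := by
  set A : Fin (n+1) → Fin (n+1) → ℝ := fun i j => amat n (ρ i).1 (ρ j).1 with hAdef
  have hA : ∀ i j, A j i = -A i j := fun i j => amat_skew n _ _
  set B : ℝ := 2*(n+1)^2 with hBdef
  have hB : (0:ℝ) < B := by positivity
  set ε := maxPay A σ with hεdef
  have hε0 : 0 ≤ ε := maxPay_nonneg A hA σ hσ
  by_contra hcon
  push_neg at hcon
  -- the relabelled strategy
  set τ : Fin (n+1) → ℝ := fun j => σ (ρ.symm j) with hτdef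
  have hτ0 : ∀ j, 0 ≤ τ j := fun j => hσ.1 _
  have hτ1 : ∑ j, τ j = 1 := by
    rw [show (∑ j, τ j) = ∑ j, σ (ρ.symm j) from rfl, Equiv.sum_comp ρ.symm σ]
    exact hσ.2
  have hτn : ∀ j : Fin (n+1), j.1 = n → τ j = 0 := by
    intro j hj
    exact hlast (ρ.symm j) (by simp [hj])
  have hpay : ∀ i : Fin (n+1), (∑ j, amat n i.1 j.1 * τ j) ≤ ε := by
    intro i
    have h1 : pay A σ (ρ.symm i) ≤ ε := pay_le_maxPay A σ _
    have h2 : pay A σ (ρ.symm i) = ∑ j, amat n i.1 j.1 * τ j := by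
      unfold pay
      rw [← Equiv.sum_comp ρ.symm (fun j => A (ρ.symm i) j * σ j)]
      refine Finset.sum_congr rfl fun j _ => ?_
      simp [hAdef, hτdef]
    rwa [h2] at h1
  -- the recursive step
  have hstep : ∀ j : Fin (n+1), j.1 < n →
      B * τ j ≤ (1+ε) + B * (if h : j.1 + 2 ≤ n then τ ⟨j.1+2, by omega⟩ else 0) := by
    intro j hj
    set T : ℝ := if h : j.1 + 2 ≤ n then τ ⟨j.1+2, by omega⟩ else 0 with hTdef
    have hT0 : 0 ≤ T := by
      rw [hTdef]; split
      · exact hτ0 _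
      · exact le_rfl
    have hi : j.1 + 1 < n + 1 := by omega
    have hg : ∀ j' : Fin (n+1),
        (if j' = j then (B+1)*τ j' else 0) - (if j'.1 = j.1+2 then (B-1)*τ j' else 0) - τ j'
          ≤ amat n (j.1+1) j'.1 * τ j' := by
      intro j'
      by_cases h1 : j' = j
      · have hv : amat n (j.1+1) j'.1 = B := by
          rw [h1, amat_win]
        rw [hv]
        have hc : ¬ (j'.1 = j.1 + 2) := by rw [h1]; omega
        rw [if_pos h1, if_neg hc]
        have : (B+1)*τ j' - 0 - τ j' = B * τ j' := by ring
        rw [this]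
      · by_cases h2 : j'.1 = j.1 + 2
        · have hv : amat n (j.1+1) j'.1 = -B := by
            rw [show j'.1 = (j.1 + 1) + 1 by omega, amat_lose, hBdef]
          rw [hv, if_neg h1, if_pos h2]
          have : (0:ℝ) - (B-1)*τ j' - τ j' = -B * τ j' := by ring
          rw [this]
        · have hne : j'.1 ≠ j.1 := fun h => h1 (Fin.ext h)
          have hv : -1 ≤ amat n (j.1+1) j'.1 :=
            amat_ge_neg_one n _ _ (by omega) (by omega)
          rw [if_neg h1, if_neg h2]
          have := mul_le_mul_of_nonneg_right hv (hτ0 j')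
          linarith
    have hsumg : (∑ j' : Fin (n+1),
        ((if j' = j then (B+1)*τ j' else 0) - (if j'.1 = j.1+2 then (B-1)*τ j' else 0) - τ j'))
        = (B+1)*τ j - (B-1)*T - 1 := by
      rw [Finset.sum_sub_distrib, Finset.sum_sub_distrib, hτ1]
      have e1 : (∑ j' : Fin (n+1), if j' = j then (B+1)*τ j' else 0) = (B+1)*τ j := by
        rw [Finset.sum_ite_eq' Finset.univ j (fun j' => (B+1)*τ j')]
        simp
      have e2 : (∑ j' : Fin (n+1), if j'.1 = j.1+2 then (B-1)*τ j' else 0) = (B-1)*T := by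
        rw [hTdef]
        split
        · rename_i h
          have hcond : ∀ j' : Fin (n+1), (j'.1 = j.1 + 2) = (j' = ⟨j.1+2, by omega⟩) := by
            intro j'
            simp [Fin.ext_iff]
          simp_rw [hcond]
          rw [Finset.sum_ite_eq' Finset.univ _ (fun j' => (B-1)*τ j')]
          simp
        · rw [mul_zero]
          apply Finset.sum_eq_zero
          intro j' _
          rw [if_neg (by omega)]
      rw [e1, e2]
    have hkey : (B+1)*τ j - (B-1)*T - 1 ≤ ε := by
      calc (B+1)*τ j - (B-1)*T - 1 = ∑ j' : Fin (n+1),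
          ((if j' = j then (B+1)*τ j' else 0) - (if j'.1 = j.1+2 then (B-1)*τ j' else 0) - τ j') :=
            hsumg.symm
        _ ≤ ∑ j', amat n (j.1+1) j'.1 * τ j' := Finset.sum_le_sum fun j' _ => hg j'
        _ ≤ ε := hpay ⟨j.1+1, hi⟩
    have hτj := hτ0 j
    linarith
  -- the downward induction
  have claim : ∀ k, ∀ j : Fin (n+1), j.1 + k = n → τ j ≤ k * (1+ε) / B := by
    intro k
    induction k using Nat.strong_induction_on with
    | _ k IH =>
      match k with
      | 0 =>
        intro j hj
        rw [hτn j (by omega)]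
        positivity
      | 1 =>
        intro j hj
        have h1 := hstep j (by omega)
        rw [dif_neg (by omega)] at h1
        rw [le_div_iff₀ hB]
        push_cast
        linarith
      | (k+2) =>
        intro j hj
        have h1 := hstep j (by omega)
        rw [dif_pos (by omega : j.1 + 2 ≤ n)] at h1
        have h2 : τ ⟨j.1+2, by omega⟩ ≤ k * (1+ε) / B :=
          IH k (by omega) _ (by simp; omega)
        rw [le_div_iff₀ hB] at h2 ⊢
        push_cast
        push_cast at h2
        nlinarith
  -- conclusion
  have hbound : ∀ j : Fin (n+1), τ j ≤ (n+1) * (1+ε) / B := by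
    intro j
    have h1 : τ j ≤ (↑(n - j.1)) * (1+ε) / B := claim (n - j.1) j (by omega)
    have h2 : ((n - j.1 : ℕ) : ℝ) ≤ (n:ℝ)+1 := by
      have : (n - j.1 : ℕ) ≤ n + 1 := by omega
      exact_mod_cast this
    refine h1.trans ?_
    gcongr
  have hfin : (1:ℝ) ≤ ((n:ℝ)+1) * ((n:ℝ)+1) * (1+ε) / B := by
    calc (1:ℝ) = ∑ j, τ j := hτ1.symm
      _ ≤ ∑ _j : Fin (n+1), ((n:ℝ)+1) * (1+ε) / B :=
          Finset.sum_le_sum fun j _ => hbound j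
      _ = ((n:ℝ)+1) * (((n:ℝ)+1) * (1+ε) / B) := by
          rw [Finset.sum_const, Finset.card_univ, Fintype.card_fin]
          push_cast
          ring
      _ = ((n:ℝ)+1) * ((n:ℝ)+1) * (1+ε) / B := by ring
  rw [le_div_iff₀ hB, hBdef] at hfin
  nlinarith [hfin, hcon, sq_nonneg ((n:ℝ)+1)]

/-- worst-case behavior of PSRO with an RGB-MSS:
for every RGB-MSS `M`, size `N`, and initial pure strategy `π₀`, there is a
skew-symmetric payoff matrix `A` on `Fin N` such that every PSRO trajectory
driven by `M` on `A` from `π₀` either (i) never achieves `PE = 0`, or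
(ii) first achieves `PE = 0` only at an iteration `t ≥ N - 1`. -/
theorem stmt0 (M : (d : ℕ) → (Fin d → Fin d → ℝ) → (Fin d → ℝ)) (hM : IsMSS M)
    (N : ℕ) (π₀ : Fin N) :
    ∃ A : Fin N → Fin N → ℝ, (∀ i j, A j i = -A i j) ∧
      ∀ s : ℕ → Fin N, IsPSROTraj M A π₀ s →
        (∀ t, 0 < PE A (popUpTo s t)) ∨
        (∀ t, PE A (popUpTo s t) = 0 → N - 1 ≤ t) := by
  match N, π₀ with
  | (n+1), π₀ =>
  set z : Fin (n+1) := ⟨0, Nat.succ_pos n⟩ with hz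
  set ρ : Fin (n+1) ≃ Fin (n+1) := Equiv.swap π₀ z with hρ
  set A : Fin (n+1) → Fin (n+1) → ℝ := fun i j => amat n (ρ i).1 (ρ j).1 with hAdef
  refine ⟨A, fun i j => amat_skew n _ _, ?_⟩
  intro s hs
  right
  intro t hPE
  by_contra hlt
  push_neg at hlt
  have htn : t < n := by omega
  have hns : ∀ u, (ρ (s u)).1 ≤ u :=
    noskip M hM ρ π₀ (by rw [hρ, Equiv.swap_apply_left]) s hs
  have h1 : (1:ℝ) ≤ PE A (popUpTo s t) := by
    apply le_csInf
    · refine ⟨maxPay A (fun j => if j = s 0 then 1 else 0),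
        ⟨fun j => if j = s 0 then 1 else 0, ⟨⟨?_, ?_⟩, ?_⟩, rfl⟩⟩
      · intro j
        dsimp only
        split <;> norm_num
      · rw [Finset.sum_ite_eq' Finset.univ (s 0) (fun _ => (1:ℝ))]
        simp
      · intro j hj
        dsimp only
        rw [if_neg]
        intro h
        exact hj ⟨0, Nat.zero_le t, h.symm⟩
    · rintro x ⟨σ, ⟨hσs, hσsupp⟩, rfl⟩
      apply core ρ σ hσs
      intro j hj
      apply hσsupp
      rintro ⟨i, hi, rfl⟩
      have := hns i
      omega
  rw [hPE] at h1
  linarith
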